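/- In any unital ring R, the additive subgroup E(R) generated by the idempotents is a Lie ideal of R, i.e., [E(R), R] ⊆ E(R). -/

import Mathlib

theorem stmt2 {R : Type*} [Ring R] :
    ∀ x ∈ AddSubgroup.closure {e : R | IsIdempotentElem e}, ∀ r : R,
      x * r - r * x ∈ AddSubgroup.closure {e : R | IsIdempotentElem e} := by
  intro x hx r
  induction hx using AddSubgroup.closure_induction with
  | mem e he =>
    have he' : e * e = e := he
    have hf : IsIdempotentElem (e + e * r * (1 - e)) := by
      unfold IsIdempotentElem
      noncomm_ring
      simp only [← mul_assoc, he']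
      noncomm_ring
    have hg : IsIdempotentElem (e + (1 - e) * r * e) := by
      unfold IsIdempotentElem
      noncomm_ring
      simp only [← mul_assoc, he']
      noncomm_ring
    have key : e * r - r * e = (e + e * r * (1 - e)) - (e + (1 - e) * r * e) := by
      noncomm_ring
    rw [key]
    exact sub_mem (AddSubgroup.subset_closure hf) (AddSubgroup.subset_closure hg)
  | zero => simpa using AddSubgroup.zero_mem _
  | add a b _ _ ha hb => simpa [add_mul, mul_add, add_sub_add_comm] using add_mem ha hb
  | neg a _ ha =>
    rw [show (-a) * r - r * (-a) = -(a * r - r * a) by noncomm_ring]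
    exact neg_mem ha
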